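/- Let K be a field, let I ⊂ K[x_1,…,x_n] be an equigenerated monomial ideal, let S(I) ⊂ ℤ^n be the set of exponent vectors of the minimal monomial generators of I, and let d be the dimension of the affine hull of S(I) in ℚ^n. Then μ(I^2) ≥ (d+1)·μ(I) − (d+1 choose 2). -/

import Mathlib

open MvPolynomial

/-- The minimal number of generators of an ideal. -/
noncomputable def mu {R : Type*} [CommRing R] (I : Ideal R) : ℕ :=
  sInf {m : ℕ | ∃ s : Finset R, s.card = m ∧ Ideal.span (s : Set R) = I}

/-- An equigenerated monomial ideal: generated by monomials all of the same total degree. -/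
def IsEquigenMonomialIdeal {K : Type*} [Field K] {n : ℕ}
    (I : Ideal (MvPolynomial (Fin n) K)) : Prop :=
  ∃ (d : ℕ) (S : Set (Fin n →₀ ℕ)), S.Nonempty ∧ (∀ v ∈ S, (∑ i, v i) = d) ∧
    I = Ideal.span ((fun v => monomial v (1 : K)) '' S)

/-- The set of exponent vectors of the minimal monomial generators of a monomial ideal. -/
def minMonGens {K : Type*} [Field K] {n : ℕ} (I : Ideal (MvPolynomial (Fin n) K)) :
    Set (Fin n →₀ ℕ) :=
  {v | monomial v (1 : K) ∈ I ∧ ∀ w : Fin n →₀ ℕ, w ≤ v → w ≠ v → monomial w (1 : K) ∉ I}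


open Module Pointwise

noncomputable instance lexLinearOrderPiFin {n : ℕ} : LinearOrder (Lex (Fin n → ℚ)) :=
  letI : WellFoundedLT (Fin n) := inferInstance
  inferInstance

namespace FreimanProofAux

lemma lt_of_add_eq {G : Type*} [AddCommGroup G] [PartialOrder G] [IsOrderedAddMonoid G] {a b c v : G}
    (h : b + c = v + a) (h2 : c < v) : a < b := by
  have h1 : a - b = c - v := sub_eq_sub_iff_add_eq_add.2 (by rw [add_comm a v, ← h, add_comm])
  exact sub_neg.1 (h1 ▸ sub_neg.2 h2)

lemma choose_succ_two (t : ℕ) : (t + 2).choose 2 = (t + 1).choose 2 + (t + 1) := by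
  rw [Nat.choose_succ_succ (t + 1) 1, Nat.choose_one_right, add_comm]

variable {n : ℕ}

lemma finrank_add_one_le_card (s : Finset (Fin n → ℚ)) (hs : s.Nonempty) :
    finrank ℚ (vectorSpan ℚ (s : Set (Fin n → ℚ))) + 1 ≤ s.card := by
  classical
  have hpos : 0 < s.card := Finset.card_pos.2 hs
  have h := finrank_vectorSpan_image_finset_le ℚ (id : (Fin n → ℚ) → (Fin n → ℚ)) s
      (n := s.card - 1) (by omega)
  rw [Finset.image_id] at h
  omega

theorem freiman : ∀ (k : ℕ) (A : Finset (Fin n → ℚ)), A.card = k → A.Nonempty →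
    ((finrank ℚ (vectorSpan ℚ (A : Set (Fin n → ℚ))) + 1) * A.card : ℤ)
      - ((finrank ℚ (vectorSpan ℚ (A : Set (Fin n → ℚ))) + 1).choose 2 : ℤ)
      ≤ ((A + A).card : ℤ) := by
  intro k
  induction k using Nat.strong_induction_on with
  | _ k IH =>
  intro A hk hA
  classical
  obtain ⟨v, hvA, hvmax⟩ : ∃ v ∈ A, ∀ b ∈ A, b ≠ v → toLex b < toLex v := by
    have hne : (A.image (toLex : (Fin n → ℚ) → Lex (Fin n → ℚ))).Nonempty := hA.image _
    obtain ⟨v, hv, hveq⟩ := Finset.mem_image.1 (Finset.max'_mem _ hne)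
    refine ⟨v, hv, fun b hb hbv => ?_⟩
    have hle : toLex b ≤ toLex v := hveq ▸ Finset.le_max' _ _ (Finset.mem_image_of_mem _ hb)
    exact hle.lt_of_ne fun hEq => hbv (toLex.injective hEq)
  set B := A.erase v with hBdef
  have hBA : B ⊆ A := Finset.erase_subset _ _
  by_cases hBne : B.Nonempty
  swap
  · -- A = {v}
    have hAv : A = {v} := by
      apply Finset.eq_singleton_iff_unique_mem.2
      refine ⟨hvA, fun a ha => ?_⟩
      by_contra hav
      exact hBne ⟨a, Finset.mem_erase.2 ⟨hav, ha⟩⟩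
    subst hAv
    rw [Finset.singleton_add_singleton]
    have hvs : vectorSpan ℚ (({v} : Finset (Fin n → ℚ)) : Set (Fin n → ℚ)) = ⊥ := by
      rw [Finset.coe_singleton, vectorSpan_singleton]
    rw [hvs]
    simp only [finrank_bot, Finset.card_singleton]
    norm_num [Nat.choose]
  -- main case
  have hvB : v ∉ B := Finset.notMem_erase _ _
  have hins : A = insert v B := (Finset.insert_erase hvA).symm
  have hcB : B.card + 1 = A.card := by
    rw [hins, Finset.card_insert_of_notMem hvB]
  set dA := finrank ℚ (vectorSpan ℚ (A : Set (Fin n → ℚ))) with hdA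
  set dB := finrank ℚ (vectorSpan ℚ (B : Set (Fin n → ℚ))) with hdB
  have hdBA : dB ≤ dA :=
    Submodule.finrank_mono (vectorSpan_mono ℚ (Finset.coe_subset.2 hBA))
  have hdAB : dA ≤ dB + 1 := by
    have h := finrank_vectorSpan_insert_le_set ℚ (B : Set (Fin n → ℚ)) v
    rw [← Finset.coe_insert, ← hins] at h
    exact h
  have hcardA : dA + 1 ≤ A.card := finrank_add_one_le_card A hA
  have hBcard1 : dB + 1 ≤ B.card := finrank_add_one_le_card B hBne
  set C := A.filter (fun a => v + a ∉ B + B) with hCdef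
  have hCA : C ⊆ A := Finset.filter_subset _ _
  have hvC : v ∈ C := by
    refine Finset.mem_filter.2 ⟨hvA, fun hmem => ?_⟩
    obtain ⟨b, hb, b', hb', heq⟩ := Finset.mem_add.1 hmem
    have hbv : toLex b < toLex v := hvmax b (hBA hb) (Finset.ne_of_mem_erase hb)
    have hb'v : toLex b' < toLex v := hvmax b' (hBA hb') (Finset.ne_of_mem_erase hb')
    have hlt : toLex (b + b') < toLex (v + v) := by
      rw [toLex_add, toLex_add]; exact add_lt_add hbv hb'v
    rw [heq] at hlt
    exact lt_irrefl _ hlt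
  -- claim 1
  have claim1 : ∀ (m : ℕ), ∀ a ∈ A, (A.filter fun x => toLex a < toLex x).card ≤ m →
      a ∈ affineSpan ℚ (C : Set (Fin n → ℚ)) := by
    intro m
    induction m using Nat.strong_induction_on with
    | _ m IHm =>
    intro a haA hm
    by_cases haC : a ∈ C
    · exact subset_affineSpan ℚ _ haC
    · have hmem : v + a ∈ B + B := by
        by_contra hcon
        exact haC (Finset.mem_filter.2 ⟨haA, hcon⟩)
      obtain ⟨b, hb, b', hb', heq⟩ := Finset.mem_add.1 hmem
      have heq' : toLex b + toLex b' = toLex v + toLex a := by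
        rw [← toLex_add, ← toLex_add, heq]
      have hbv : toLex b < toLex v := hvmax b (hBA hb) (Finset.ne_of_mem_erase hb)
      have hb'v : toLex b' < toLex v := hvmax b' (hBA hb') (Finset.ne_of_mem_erase hb')
      have hab : toLex a < toLex b := lt_of_add_eq heq' hb'v
      have hab' : toLex a < toLex b' := lt_of_add_eq (by rw [add_comm, heq']) hbv
      have hkey : ∀ x ∈ A, toLex a < toLex x →
          (A.filter fun y => toLex x < toLex y).card < (A.filter fun y => toLex a < toLex y).card := by
        intro x hx hax
        apply Finset.card_lt_card
        rw [Finset.ssubset_iff_of_subset]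
        · exact ⟨x, Finset.mem_filter.2 ⟨hx, hax⟩, fun hc => lt_irrefl _ (Finset.mem_filter.1 hc).2⟩
        · intro y hy
          have hy' := Finset.mem_filter.1 hy
          exact Finset.mem_filter.2 ⟨hy'.1, lt_trans hax hy'.2⟩
      have hbspan : b ∈ affineSpan ℚ (C : Set (Fin n → ℚ)) :=
        IHm _ (lt_of_lt_of_le (hkey b (hBA hb) hab) hm) b (hBA hb) le_rfl
      have hb'span : b' ∈ affineSpan ℚ (C : Set (Fin n → ℚ)) :=
        IHm _ (lt_of_lt_of_le (hkey b' (hBA hb') hab') hm) b' (hBA hb') le_rfl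
      have hvspan : v ∈ affineSpan ℚ (C : Set (Fin n → ℚ)) := subset_affineSpan ℚ _ hvC
      have hrepr : (1 : ℚ) • (b -ᵥ v) +ᵥ b' = a := by
        simp only [vsub_eq_sub, vadd_eq_add, one_smul]
        rw [sub_add_eq_add_sub, heq, add_sub_cancel_left]
      exact hrepr ▸ AffineSubspace.smul_vsub_vadd_mem _ 1 hbspan hvspan hb'span
  have hspanAC : affineSpan ℚ (A : Set (Fin n → ℚ)) ≤ affineSpan ℚ (C : Set (Fin n → ℚ)) :=
    affineSpan_le.2 fun a ha => claim1 _ a ha le_rfl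
  have hCcard : dA + 1 ≤ C.card := by
    have h1 : dA ≤ finrank ℚ (vectorSpan ℚ (C : Set (Fin n → ℚ))) := by
      have h := Submodule.finrank_mono (AffineSubspace.direction_le hspanAC)
      rwa [direction_affineSpan, direction_affineSpan] at h
    have h2 := finrank_add_one_le_card C ⟨v, hvC⟩
    omega
  -- counting
  have hBBsub : B + B ⊆ A + A := Finset.add_subset_add hBA hBA
  have hDsub : C.image (fun a => v + a) ⊆ A + A := by
    intro x hx
    obtain ⟨a, haC, rfl⟩ := Finset.mem_image.1 hx
    exact Finset.add_mem_add hvA (hCA haC)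
  have hdisj : Disjoint (B + B) (C.image fun a => v + a) := by
    rw [Finset.disjoint_right]
    intro x hx
    obtain ⟨a, haC, rfl⟩ := Finset.mem_image.1 hx
    exact (Finset.mem_filter.1 haC).2
  have hcount : (B + B).card + C.card ≤ (A + A).card := by
    have h := Finset.card_le_card (Finset.union_subset hBBsub hDsub)
    rwa [Finset.card_union_of_disjoint hdisj,
      Finset.card_image_of_injective _ (add_right_injective v)] at h
  have hIHB : ((dB + 1) * B.card : ℤ) - ((dB + 1).choose 2 : ℤ) ≤ ((B + B).card : ℤ) := by
    have hklt : B.card < k := by omega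
    exact IH B.card hklt B rfl hBne
  -- final case split
  by_cases hvmem : v ∈ affineSpan ℚ (B : Set (Fin n → ℚ))
  · have hspan_eq : affineSpan ℚ (A : Set (Fin n → ℚ)) = affineSpan ℚ (B : Set (Fin n → ℚ)) := by
      refine le_antisymm (affineSpan_le.2 ?_) (affineSpan_mono ℚ (Finset.coe_subset.2 hBA))
      intro a ha
      rcases eq_or_ne a v with rfl | hav
      · exact hvmem
      · exact subset_affineSpan ℚ _ (Finset.mem_coe.2 (Finset.mem_erase.2 ⟨hav, ha⟩))
    have hd_eq : dA = dB := by
      rw [hdA, hdB, ← direction_affineSpan, ← direction_affineSpan, hspan_eq]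
    have hBB : ((dA + 1) * B.card : ℤ) - ((dA + 1).choose 2 : ℤ) ≤ ((B + B).card : ℤ) := by
      rw [hd_eq]; exact hIHB
    have hAc : (A.card : ℤ) = (B.card : ℤ) + 1 := by exact_mod_cast hcB.symm
    have hCc : ((dA : ℤ) + 1) ≤ (C.card : ℤ) := by exact_mod_cast hCcard
    have hcount' : ((B + B).card : ℤ) + (C.card : ℤ) ≤ ((A + A).card : ℤ) := by
      exact_mod_cast hcount
    have hmul : ((dA : ℤ) + 1) * (A.card : ℤ) = ((dA : ℤ) + 1) * (B.card : ℤ) + ((dA : ℤ) + 1) := by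
      rw [hAc]; ring
    push_cast
    push_cast at hBB hmul
    linarith
  · -- v not in span of B : C = A
    have hCA' : C = A := by
      apply Finset.filter_true_of_mem
      intro a haA hmem
      obtain ⟨b, hb, b', hb', heq⟩ := Finset.mem_add.1 hmem
      apply hvmem
      rcases eq_or_ne a v with rfl | hav
      · have hrepr : ((2 : ℚ)⁻¹) • (b' -ᵥ b) +ᵥ b = a := by
          simp only [vsub_eq_sub, vadd_eq_add]
          have h2 : (2 : ℚ) • (((2 : ℚ)⁻¹) • (b' - b) + b) = (2 : ℚ) • a := by
            rw [smul_add, smul_inv_smul₀ (two_ne_zero), two_smul, two_smul]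
            have habel : b' - b + (b + b) = b + b' := by abel
            rw [habel, heq]
          exact smul_right_injective _ (two_ne_zero) h2
        exact hrepr ▸ AffineSubspace.smul_vsub_vadd_mem _ _
          (subset_affineSpan ℚ _ (Finset.mem_coe.2 hb'))
          (subset_affineSpan ℚ _ (Finset.mem_coe.2 hb))
          (subset_affineSpan ℚ _ (Finset.mem_coe.2 hb))
      · have haB : a ∈ B := Finset.mem_erase.2 ⟨hav, haA⟩
        have hrepr : (1 : ℚ) • (b -ᵥ a) +ᵥ b' = v := by
          simp only [vsub_eq_sub, vadd_eq_add, one_smul]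
          rw [sub_add_eq_add_sub, heq, add_sub_cancel_right]
        exact hrepr ▸ AffineSubspace.smul_vsub_vadd_mem _ 1
          (subset_affineSpan ℚ _ (Finset.mem_coe.2 hb))
          (subset_affineSpan ℚ _ (Finset.mem_coe.2 haB))
          (subset_affineSpan ℚ _ (Finset.mem_coe.2 hb'))
    have hCc : (C.card : ℤ) = (A.card : ℤ) := by rw [hCA']
    have hAc : (A.card : ℤ) = (B.card : ℤ) + 1 := by exact_mod_cast hcB.symm
    have hcount' : ((B + B).card : ℤ) + (C.card : ℤ) ≤ ((A + A).card : ℤ) := by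
      exact_mod_cast hcount
    rcases (show dB = dA ∨ dA = dB + 1 by omega) with h | h
    · have hBB : ((dA + 1) * B.card : ℤ) - ((dA + 1).choose 2 : ℤ) ≤ ((B + B).card : ℤ) := by
        rw [← h]; exact hIHB
      have hAcard : ((dA : ℤ) + 1) ≤ (A.card : ℤ) := by exact_mod_cast hcardA
      have hmul : ((dA : ℤ) + 1) * (A.card : ℤ) = ((dA : ℤ) + 1) * (B.card : ℤ) + ((dA : ℤ) + 1) := by
        rw [hAc]; ring
      push_cast
      push_cast at hBB hmul
      linarith
    · have hch : ((dA + 1).choose 2 : ℤ) = ((dB + 1).choose 2 : ℤ) + (dB + 1 : ℤ) := by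
        rw [h]
        have := choose_succ_two dB
        push_cast [this]
        ring
      have hdAcast : (dA : ℤ) = (dB : ℤ) + 1 := by exact_mod_cast h
      have hmul : ((dA : ℤ) + 1) * (A.card : ℤ)
          = ((dB : ℤ) + 1) * (B.card : ℤ) + (B.card : ℤ) + (dB : ℤ) + 2 := by
        rw [hdAcast, hAc]; ring
      push_cast
      push_cast at hIHB hmul
      rw [hch]
      linarith
end FreimanProofAux


open MvPolynomial Pointwise


namespace IdealPartAux

variable {K : Type*} [Field K] {n : ℕ}

lemma sum_add_apply (a b : Fin n →₀ ℕ) : (∑ i, (a + b) i) = (∑ i, a i) + ∑ i, b i := by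
  simp [Finsupp.add_apply, Finset.sum_add_distrib]

lemma finsupp_eq_of_le_of_sum_eq {v w : Fin n →₀ ℕ} (h : w ≤ v) (hs : (∑ i, w i) = ∑ i, v i) :
    w = v := by
  have hle : ∀ i, w i ≤ v i := Finsupp.le_def.1 h
  have hall := (Finset.sum_eq_sum_iff_of_le (fun i _ => hle i)).1 hs
  ext i
  exact hall i (Finset.mem_univ i)

lemma mem_span_mono_iff {S : Set (Fin n →₀ ℕ)} {v : Fin n →₀ ℕ} :
    monomial v (1 : K) ∈ Ideal.span ((fun u => monomial u (1 : K)) '' S) ↔ ∃ s ∈ S, s ≤ v := by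
  rw [mem_ideal_span_monomial_image]
  have hsupp : (monomial v (1 : K)).support = {v} := by
    classical
    rw [support_monomial, if_neg one_ne_zero]
  simp [hsupp]

lemma minMonGens_eq {d₀ : ℕ} {S : Set (Fin n →₀ ℕ)} (hdeg : ∀ v ∈ S, (∑ i, v i) = d₀)
    {I : Ideal (MvPolynomial (Fin n) K)}
    (hIdef : I = Ideal.span ((fun u => monomial u (1 : K)) '' S)) :
    minMonGens I = S := by
  ext v
  simp only [minMonGens, Set.mem_setOf_eq]
  constructor
  · rintro ⟨hvI, hmin⟩
    rw [hIdef, mem_span_mono_iff] at hvI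
    obtain ⟨s, hsS, hsv⟩ := hvI
    rcases eq_or_ne s v with rfl | hsv'
    · exact hsS
    · exact absurd (by rw [hIdef]; exact Ideal.subset_span ⟨s, hsS, rfl⟩) (hmin s hsv hsv')
  · intro hvS
    refine ⟨by rw [hIdef]; exact Ideal.subset_span ⟨v, hvS, rfl⟩, fun w hwv hwne hwI => ?_⟩
    rw [hIdef, mem_span_mono_iff] at hwI
    obtain ⟨s, hsS, hsw⟩ := hwI
    have h2 : s = v :=
      finsupp_eq_of_le_of_sum_eq (le_trans hsw hwv) (by rw [hdeg s hsS, hdeg v hvS])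
    subst h2
    exact hwne (le_antisymm hwv hsw)

lemma S_finite {d₀ : ℕ} {S : Set (Fin n →₀ ℕ)} (hdeg : ∀ v ∈ S, (∑ i, v i) = d₀) :
    S.Finite := by
  classical
  have hsub : S ⊆ Set.Iic (Finsupp.equivFunOnFinite.symm fun _ => d₀) := by
    intro v hv
    rw [Set.mem_Iic, Finsupp.le_def]
    intro i
    have h1 : v i ≤ ∑ j, v j := Finset.single_le_sum (fun j _ => Nat.zero_le _) (Finset.mem_univ i)
    have h2 : (Finsupp.equivFunOnFinite.symm fun _ : Fin n => d₀) i = d₀ := by simp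
    rw [h2]
    rw [hdeg v hv] at h1
    exact h1
  exact (Set.finite_Iic _).subset hsub

lemma card_le_of_span_eq (T : Finset (Fin n →₀ ℕ)) (D : ℕ)
    (hdeg : ∀ v ∈ T, (∑ i, v i) = D)
    (s : Finset (MvPolynomial (Fin n) K))
    (hs : Ideal.span (s : Set (MvPolynomial (Fin n) K))
        = Ideal.span ((fun u => monomial u (1 : K)) '' (T : Set (Fin n →₀ ℕ)))) :
    T.card ≤ s.card := by
  classical
  set J := Ideal.span ((fun u => monomial u (1 : K)) '' (T : Set (Fin n →₀ ℕ))) with hJ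
  set L : MvPolynomial (Fin n) K →ₗ[K] (↥T → K) :=
    { toFun := fun p t => coeff (t : Fin n →₀ ℕ) p
      map_add' := by intro p q; funext t; simp [coeff_add]
      map_smul' := by intro c p; funext t; simp [coeff_smul] } with hL
  have hdegJ : ∀ p ∈ J, ∀ w ∈ p.support, D ≤ ∑ i, w i := by
    intro p hp w hw
    obtain ⟨t, htT, htw⟩ := mem_ideal_span_monomial_image.1 hp w hw
    calc D = ∑ i, t i := (hdeg t htT).symm
    _ ≤ ∑ i, w i := Finset.sum_le_sum fun i _ => Finsupp.le_def.1 htw i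
  have hLmul : ∀ (f p : MvPolynomial (Fin n) K), p ∈ J → L (f * p) = coeff 0 f • L p := by
    intro f p hp
    funext t
    have htT : (t : Fin n →₀ ℕ) ∈ T := t.2
    show coeff (t : Fin n →₀ ℕ) (f * p) = coeff 0 f • coeff (t : Fin n →₀ ℕ) p
    rw [coeff_mul, Finset.sum_eq_single_of_mem ((0 : Fin n →₀ ℕ), (t : Fin n →₀ ℕ))
      (Finset.HasAntidiagonal.mem_antidiagonal.2 (zero_add _))]
    · simp [smul_eq_mul]
    · rintro ⟨a, b⟩ hab hne
      rcases eq_or_ne (coeff b p) 0 with h0 | h0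
      · simp [h0]
      · exfalso
        have hbsupp : b ∈ p.support := mem_support_iff.2 h0
        have hD : D ≤ ∑ i, b i := hdegJ p hp b hbsupp
        have habt : a + b = (t : Fin n →₀ ℕ) := Finset.HasAntidiagonal.mem_antidiagonal.1 hab
        have hsum : (∑ i, a i) + (∑ i, b i) = D := by
          rw [← sum_add_apply, habt]; exact hdeg _ htT
        have hsa : (∑ i, a i) = 0 := by omega
        have ha : a = 0 := by
          ext i
          exact Finset.sum_eq_zero_iff.1 hsa i (Finset.mem_univ i)
        apply hne
        rw [ha, zero_add] at habt
        rw [ha, habt]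
  have hmain : ∀ p ∈ J, L p ∈ Submodule.span K (L '' (s : Set (MvPolynomial (Fin n) K))) := by
    intro p hp
    rw [← hs] at hp
    refine (Submodule.span_induction
      (p := fun x _ => x ∈ J ∧ L x ∈ Submodule.span K (L '' (s : Set (MvPolynomial (Fin n) K))))
      ?_ ?_ ?_ ?_ hp).2
    · intro x hx
      exact ⟨hs ▸ Ideal.subset_span hx, Submodule.subset_span ⟨x, hx, rfl⟩⟩
    · exact ⟨Ideal.zero_mem _, by rw [map_zero]; exact Submodule.zero_mem _⟩
    · rintro x y _ _ ⟨hxJ, hxL⟩ ⟨hyJ, hyL⟩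
      exact ⟨Ideal.add_mem _ hxJ hyJ, by rw [map_add]; exact Submodule.add_mem _ hxL hyL⟩
    · rintro f x _ ⟨hxJ, hxL⟩
      refine ⟨Ideal.mul_mem_left _ f (by exact hxJ), ?_⟩
      rw [smul_eq_mul, hLmul f x hxJ]
      exact Submodule.smul_mem _ _ hxL
  have hsingle : ∀ t : ↥T, L (monomial (t : Fin n →₀ ℕ) (1 : K)) = Pi.single t 1 := by
    intro t
    funext t'
    have h1 : L (monomial (t : Fin n →₀ ℕ) (1 : K)) t'
        = coeff (t' : Fin n →₀ ℕ) (monomial (t : Fin n →₀ ℕ) (1 : K)) := rfl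
    rw [h1, coeff_monomial]
    rcases eq_or_ne t' t with rfl | hne
    · rw [if_pos rfl, Pi.single_eq_same]
    · rw [if_neg fun h => hne (Subtype.ext h.symm), Pi.single_eq_of_ne hne]
  have htop : ∀ x : (↥T → K), x ∈ Submodule.span K (L '' (s : Set (MvPolynomial (Fin n) K))) := by
    intro x
    have hx : x = ∑ t : ↥T, x t • L (monomial (t : Fin n →₀ ℕ) (1 : K)) := by
      funext u
      rw [Finset.sum_apply]
      simp only [hsingle, Pi.smul_apply, smul_eq_mul]
      rw [Finset.sum_eq_single_of_mem u (Finset.mem_univ u)]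
      · rw [Pi.single_eq_same, mul_one]
      · intro t _ htu
        rw [Pi.single_eq_of_ne (Ne.symm htu), mul_zero]
    rw [hx]
    exact Submodule.sum_mem _ fun t _ =>
      Submodule.smul_mem _ _ (hmain _ (Ideal.subset_span ⟨(t : Fin n →₀ ℕ), t.2, rfl⟩))
  have hspan_top : Submodule.span K (L '' (s : Set (MvPolynomial (Fin n) K))) = ⊤ :=
    eq_top_iff.2 fun x _ => htop x
  have hfin : T.card = Module.finrank K (↥T → K) := by
    rw [Module.finrank_pi, Fintype.card_coe]
  calc T.card = Module.finrank K (↥T → K) := hfin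
  _ = Module.finrank K (⊤ : Submodule K (↥T → K)) := (finrank_top _ _).symm
  _ = Module.finrank K (Submodule.span K (L '' (s : Set (MvPolynomial (Fin n) K)))) := by
      rw [hspan_top]
  _ ≤ (s.image (⇑L)).card := by
      rw [← Finset.coe_image]
      exact finrank_span_finset_le_card (R := K) (s.image (⇑L))
  _ ≤ s.card := Finset.card_image_le

end IdealPartAux


section MainTheorem

open MvPolynomial Pointwise

/-- Theorem 1.11 (via Freiman's theorem): if `I ⊂ K[x₁,…,xₙ]` is an equigenerated monomial
ideal and `d` is the dimension of the affine hull in `ℚⁿ` of the set `S(I)` of exponent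
vectors of the minimal monomial generators of `I`, then
`μ(I²) ≥ (d+1)·μ(I) - ((d+1) choose 2)`. -/
theorem numGen_square_freiman {K : Type*} [Field K] {n : ℕ}
    (I : Ideal (MvPolynomial (Fin n) K)) (hI : IsEquigenMonomialIdeal I)
    (d : ℕ)
    (hd : d = Module.finrank ℚ
      (affineSpan ℚ ((fun v : Fin n →₀ ℕ => fun i : Fin n => (v i : ℚ)) '' minMonGens I)).direction) :
    ((d + 1) * mu I : ℤ) - (d + 1).choose 2 ≤ (mu (I ^ 2) : ℤ) := by
  classical
  obtain ⟨d₀, S, hSne, hdeg, hIdef⟩ := hI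
  have hSfin : S.Finite := IdealPartAux.S_finite hdeg
  set SF := hSfin.toFinset with hSFdef
  have hSFcoe : (SF : Set (Fin n →₀ ℕ)) = S := hSfin.coe_toFinset
  have hSFne : SF.Nonempty := by
    obtain ⟨x, hx⟩ := hSne
    exact ⟨x, hSfin.mem_toFinset.2 hx⟩
  have hmin : minMonGens I = S := IdealPartAux.minMonGens_eq hdeg hIdef
  have hI2 : I ^ 2 = Ideal.span
      ((fun u => monomial u (1 : K)) '' ((SF + SF : Finset (Fin n →₀ ℕ)) : Set (Fin n →₀ ℕ))) := by
    rw [pow_two, hIdef, Ideal.span_mul_span']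
    congr 1
    rw [Finset.coe_add, hSFcoe, ← Set.image2_mul, Set.image2_image_left, Set.image2_image_right,
      ← Set.image2_add, Set.image_image2]
    apply Set.image2_congr
    intro a _ b _
    rw [monomial_mul, one_mul]
  have hdeg2 : ∀ v ∈ SF + SF, (∑ i, v i) = d₀ + d₀ := by
    intro v hv
    obtain ⟨a, ha, b, hb, rfl⟩ := Finset.mem_add.1 hv
    rw [IdealPartAux.sum_add_apply, hdeg a (hSfin.mem_toFinset.1 ha),
      hdeg b (hSfin.mem_toFinset.1 hb)]
  have hlow : (SF + SF).card ≤ mu (I ^ 2) := by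
    apply le_csInf
    · exact ⟨((SF + SF).image (fun u => monomial u (1 : K))).card,
        (SF + SF).image (fun u => monomial u (1 : K)), rfl,
        by rw [Finset.coe_image]; exact hI2.symm⟩
    · rintro m ⟨s, rfl, hspan⟩
      exact IdealPartAux.card_le_of_span_eq (SF + SF) (d₀ + d₀) hdeg2 s (by rw [hspan, hI2])
  have hup : mu I ≤ SF.card := by
    have h1 : mu I ≤ (SF.image (fun u => monomial u (1 : K))).card :=
      Nat.sInf_le ⟨SF.image (fun u => monomial u (1 : K)), rfl,
        by rw [Finset.coe_image, hSFcoe]; exact hIdef.symm⟩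
    exact h1.trans Finset.card_image_le
  set emb : (Fin n →₀ ℕ) →+ (Fin n → ℚ) :=
    { toFun := fun v i => (v i : ℚ)
      map_zero' := by funext i; simp
      map_add' := by intro a b; funext i; simp } with hembdef
  have hembinj : Function.Injective (⇑emb) := by
    intro a b hab
    ext i
    have h' : ((a i : ℚ)) = (b i : ℚ) := congrFun hab i
    exact_mod_cast h'
  set A := SF.image (⇑emb) with hAdef
  have hAne : A.Nonempty := hSFne.image _
  have hAcard : A.card = SF.card := Finset.card_image_of_injective _ hembinj
  have hAA : A + A = (SF + SF).image (⇑emb) := (Finset.image_add emb).symm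
  have hAAcard : (A + A).card = (SF + SF).card := by
    rw [hAA, Finset.card_image_of_injective _ hembinj]
  have hAset : (A : Set (Fin n → ℚ))
      = (fun v : Fin n →₀ ℕ => fun i : Fin n => (v i : ℚ)) '' minMonGens I := by
    rw [hAdef, Finset.coe_image, hSFcoe, hmin]
    rfl
  have hdd : d = Module.finrank ℚ (vectorSpan ℚ (A : Set (Fin n → ℚ))) := by
    rw [hd, ← hAset, direction_affineSpan]
  have hfre := FreimanProofAux.freiman A.card A rfl hAne
  rw [← hdd] at hfre
  have c1 : (mu I : ℤ) ≤ (SF.card : ℤ) := by exact_mod_cast hup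
  have c2 : ((SF + SF).card : ℤ) ≤ (mu (I ^ 2) : ℤ) := by exact_mod_cast hlow
  have c3 : ((d : ℤ) + 1) * (mu I : ℤ) ≤ ((d : ℤ) + 1) * (SF.card : ℤ) :=
    mul_le_mul_of_nonneg_left c1 (by positivity)
  have c4 : (A.card : ℤ) = (SF.card : ℤ) := by exact_mod_cast hAcard
  have c5 : ((A + A).card : ℤ) = ((SF + SF).card : ℤ) := by exact_mod_cast hAAcard
  have c6 : ((d : ℤ) + 1) * (A.card : ℤ) = ((d : ℤ) + 1) * (SF.card : ℤ) := by rw [c4]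
  linarith

end MainTheorem
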